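/- There is an injection from the set U = {(ρ, s) : ρ ∈ R(n, αn), 1 ≤ s ≤ useNum(L↾ρ)} into the set V = {(ρ', a) : ρ' ∈ ∪_{k=0}^{w} R(n, αn - k), a ∈ {Old, New}^w}, where L is any width-w decision list on n variables and R(n,k) denotes restrictions in {0,1,*}^n with exactly k stars. In particular |U| ≤ |V|. -/

import Mathlib

open Finset
open scoped Classical BigOperators

noncomputable section

/-- A term over `n` Boolean variables, given as a partial assignment:
`C i = some b` means the literal `x i = b` appears in the term. -/
abbrev Term (n : ℕ) := Fin n → Option Bool

/-- Satisfaction of a term by an assignment. -/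
def TermSat {n : ℕ} (C : Term n) (x : Fin n → Bool) : Prop :=
  ∀ i b, C i = some b → x i = b

/-- Width of a term: the number of variables it mentions. -/
def termWidth {n : ℕ} (C : Term n) : ℕ :=
  (Finset.univ.filter fun i => C i ≠ none).card

/-- The index function of a decision list with terms `C`:
the first index whose term is satisfied by `x` (and `m` conventionally if none,
since `sInf ∅ = 0`; the default rule hypothesis makes the set nonempty). -/
def DLind {n m : ℕ} (C : Fin m → Term n) (x : Fin n → Bool) : ℕ :=
  sInf {i : ℕ | ∃ h : i < m, TermSat (C ⟨i, h⟩) x}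

/-- Evaluation of a decision list with terms `C` and values `v`. -/
def DLeval {n m : ℕ} {V : Type} [Inhabited V] (C : Fin m → Term n)
    (v : Fin m → V) (x : Fin n → Bool) : V :=
  if h : DLind C x < m then v ⟨DLind C x, h⟩ else default

/-- Probability of an event under the uniform distribution on `{0,1}^n`. -/
def pr (n : ℕ) (P : (Fin n → Bool) → Prop) : ℝ :=
  ((Finset.univ.filter P).card : ℝ) / 2 ^ n

/-- Hit probability of index `i` in the decision list with terms `C`. -/
def pL {n m : ℕ} (C : Fin m → Term n) (i : ℕ) : ℝ :=
  pr n fun x => DLind C x = i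

/-- The index function of the sub-decision-list `L|_J`. -/
def DLindSub {n m : ℕ} (C : Fin m → Term n) (J : Finset (Fin m)) (x : Fin n → Bool) : ℕ :=
  sInf {i : ℕ | ∃ h : i < m, (⟨i, h⟩ : Fin m) ∈ J ∧ TermSat (C ⟨i, h⟩) x}

/-- Evaluation of the sub-decision-list `L|_J`. -/
def DLevalSub {n m : ℕ} {V : Type} [Inhabited V] (C : Fin m → Term n) (v : Fin m → V)
    (J : Finset (Fin m)) (x : Fin n → Bool) : V :=
  if h : DLindSub C J x < m then v ⟨DLindSub C J x, h⟩ else default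

/-- A restriction: `some b` fixes a coordinate to `b`, `none` is a star. -/
abbrev Restriction (n : ℕ) := Fin n → Option Bool

/-- `x` is a completion of the restriction `ρ`. -/
def Compatible {n : ℕ} (ρ : Restriction n) (x : Fin n → Bool) : Prop :=
  ∀ i b, ρ i = some b → x i = b

/-- Number of stars of a restriction. -/
def stars {n : ℕ} (ρ : Restriction n) : ℕ :=
  (Finset.univ.filter fun i => ρ i = none).card

/-- Weight of a restriction under the product distribution `U(n, α)`:
each coordinate independently `*` with probability `α`, and `0` or `1`
each with probability `(1-α)/2`. -/
def restW {n : ℕ} (α : ℝ) (ρ : Restriction n) : ℝ :=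
  ∏ i : Fin n, if ρ i = none then α else (1 - α) / 2

/-- Index `i` is useful in the restricted decision list `L↾ρ`: some completion
of `ρ` hits rule `i`. -/
def Useful {n m : ℕ} (C : Fin m → Term n) (ρ : Restriction n) (i : Fin m) : Prop :=
  ∃ x, Compatible ρ x ∧ DLind C x = i.val

/-- Number of useful indices of `L↾ρ`. -/
def useNum {n m : ℕ} (C : Fin m → Term n) (ρ : Restriction n) : ℕ :=
  (Finset.univ.filter fun i : Fin m => Useful C ρ i).card

/-- `q_L(α, i)`: probability over `ρ ~ U(n, α)` that index `i` is useful in `L↾ρ`. -/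
def qL {n m : ℕ} (C : Fin m → Term n) (α : ℝ) (i : Fin m) : ℝ :=
  ∑ ρ : Restriction n, restW α ρ * (if Useful C ρ i then 1 else 0)

/-- Transition weight of the `β`-noise on a single bit. -/
def noiseW (β : ℝ) (a b : Bool) : ℝ := if a = b then (1 + β) / 2 else (1 - β) / 2

/-- Joint density of `(x, y)` where `x` is uniform and `y ~ N_β(x)`. -/
def pairW {n : ℕ} (β : ℝ) (x y : Fin n → Bool) : ℝ :=
  (1 / 2) ^ n * ∏ i : Fin n, noiseW β (x i) (y i)

/-- `Stab_L(β, i) = Pr[Ind L(x) = Ind L(y) = i]` for `x` uniform, `y ~ N_β(x)`. -/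
def StabInd {n m : ℕ} (C : Fin m → Term n) (β : ℝ) (i : Fin m) : ℝ :=
  ∑ x : Fin n → Bool, ∑ y : Fin n → Bool,
    pairW β x y * (if DLind C x = i.val ∧ DLind C y = i.val then 1 else 0)

/-- `Stab_β(g) = Pr[g(x) = g(y) = 1]` for `x` uniform, `y ~ N_β(x)`. -/
def stab {n : ℕ} (β : ℝ) (g : (Fin n → Bool) → Bool) : ℝ :=
  ∑ x : Fin n → Bool, ∑ y : Fin n → Bool,
    pairW β x y * (if g x = true ∧ g y = true then 1 else 0)

/-- Probability weight that a uniform completion of `ρ` equals `x`. -/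
def compW {n : ℕ} (ρ : Restriction n) (x : Fin n → Bool) : ℝ :=
  if Compatible ρ x then (1 / 2) ^ stars ρ else 0

/-- Evaluation of a DNF with terms `T`. -/
def DNFeval {n M : ℕ} (T : Fin M → Term n) (x : Fin n → Bool) : Prop :=
  ∃ t, TermSat (T t) x

namespace EncodingAux

variable {n m : ℕ}

def Forced (D : Term n) (σ : Restriction n) : Prop :=
  ∀ v b, D v = some b → σ v = some b

def varsOf (D : Term n) : Finset (Fin n) :=
  Finset.univ.filter fun v => D v ≠ none

lemma varsOf_card (D : Term n) : (varsOf D).card = termWidth D := rfl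

noncomputable def uset (C : Fin m → Term n) (ρ : Restriction n) : Finset (Fin m) :=
  Finset.univ.filter fun i => Useful C ρ i

lemma useNum_eq (C : Fin m → Term n) (ρ : Restriction n) : useNum C ρ = (uset C ρ).card := rfl

noncomputable def encJ (C : Fin m → Term n) (hm : 0 < m) (ρ : Restriction n) (s : ℕ) : Fin m :=
  if h : s - 1 < (uset C ρ).card then
    (((uset C ρ).orderIsoOfFin rfl) ⟨s - 1, h⟩ : {x // x ∈ uset C ρ}).val
  else ⟨0, hm⟩

lemma encJ_mem (C : Fin m → Term n) (hm : 0 < m) (ρ : Restriction n) (s : ℕ)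
    (h : s - 1 < (uset C ρ).card) : encJ C hm ρ s ∈ uset C ρ := by
  rw [encJ, dif_pos h]; exact (((uset C ρ).orderIsoOfFin rfl) ⟨s - 1, h⟩).2

lemma encJ_useful (C : Fin m → Term n) (hm : 0 < m) (ρ : Restriction n) (s : ℕ)
    (h : s - 1 < (uset C ρ).card) : Useful C ρ (encJ C hm ρ s) := by
  have := encJ_mem C hm ρ s h
  rw [uset, Finset.mem_filter] at this
  exact this.2

lemma encJ_symm (C : Fin m → Term n) (hm : 0 < m) (ρ : Restriction n) (s : ℕ)
    (h : s - 1 < (uset C ρ).card) (hmem : encJ C hm ρ s ∈ uset C ρ) :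
    ((((uset C ρ).orderIsoOfFin rfl).symm ⟨encJ C hm ρ s, hmem⟩ : Fin _)).val = s - 1 := by
  have hval : encJ C hm ρ s = (((uset C ρ).orderIsoOfFin rfl) ⟨s - 1, h⟩).val := by
    rw [encJ, dif_pos h]
  have h2 : (⟨encJ C hm ρ s, hmem⟩ : {x // x ∈ uset C ρ})
      = (uset C ρ).orderIsoOfFin rfl ⟨s - 1, h⟩ := Subtype.ext hval
  rw [h2, OrderIso.symm_apply_apply]

noncomputable def encX (C : Fin m → Term n) (ρ : Restriction n) (j : Fin m) : Fin n → Bool :=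
  if h : Useful C ρ j then h.choose else fun _ => false

lemma encX_spec (C : Fin m → Term n) (ρ : Restriction n) (j : Fin m) (h : Useful C ρ j) :
    Compatible ρ (encX C ρ j) ∧ DLind C (encX C ρ j) = j.val := by
  rw [encX, dif_pos h]; exact h.choose_spec

noncomputable def encR (C : Fin m → Term n) (ρ : Restriction n) (j : Fin m) : Restriction n :=
  fun v => if ρ v = none ∧ C j v ≠ none then some (encX C ρ j v) else ρ v

noncomputable def encA (C : Fin m → Term n) (ρ : Restriction n) (j : Fin m) (w : ℕ) :
    Fin w → Bool := fun l =>
  if h : l.val < (varsOf (C j)).card then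
    decide (ρ ((((varsOf (C j)).orderIsoOfFin rfl) ⟨l.val, h⟩ : {x // x ∈ varsOf (C j)}).val) = none)
  else false

lemma stars_encR (C : Fin m → Term n) (ρ : Restriction n) (j : Fin m) :
    ∃ t, t ≤ termWidth (C j) ∧ stars (encR C ρ j) = stars ρ - t := by
  refine ⟨((varsOf (C j)).filter fun v => ρ v = none).card,
    le_trans (Finset.card_filter_le _ _) (le_of_eq (varsOf_card _)), ?_⟩
  rw [stars, stars]
  have hset : (Finset.univ.filter fun v => encR C ρ j v = none)
      = (Finset.univ.filter fun v => ρ v = none) \ ((varsOf (C j)).filter fun v => ρ v = none) := by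
    ext v
    by_cases hc : ρ v = none ∧ C j v ≠ none
    · rw [Finset.mem_filter]
      simp [encR, hc, varsOf]
    · rw [Finset.mem_filter]
      simp only [encR, if_neg hc, Finset.mem_filter, Finset.mem_sdiff, Finset.mem_univ, true_and,
        varsOf]
      tauto
  rw [hset, Finset.card_sdiff_of_subset]
  intro v hv
  simp only [Finset.mem_filter] at hv ⊢
  exact ⟨Finset.mem_univ v, hv.2⟩

lemma dlind_mem (C : Fin m → Term n) (hm : 0 < m)
    (hlast : C ⟨m - 1, Nat.sub_lt hm one_pos⟩ = fun _ => none) (x : Fin n → Bool) :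
    ∃ hx : DLind C x < m, TermSat (C ⟨DLind C x, hx⟩) x := by
  have hne : {i : ℕ | ∃ h : i < m, TermSat (C ⟨i, h⟩) x}.Nonempty := by
    refine ⟨m - 1, Nat.sub_lt hm one_pos, ?_⟩
    rw [hlast]; intro i b hib; simp at hib
  exact Nat.sInf_mem hne

lemma decodeJ (C : Fin m → Term n) (hm : 0 < m)
    (hlast : C ⟨m - 1, Nat.sub_lt hm one_pos⟩ = fun _ => none)
    (ρ : Restriction n) (j : Fin m) (hj : Useful C ρ j) :
    j.val = sInf {i : ℕ | ∃ h : i < m, Forced (C ⟨i, h⟩) (encR C ρ j)} := by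
  obtain ⟨hcomp, hind⟩ := encX_spec C ρ j hj
  have hcomp' : ∀ v b, encR C ρ j v = some b → encX C ρ j v = b := by
    intro v b hvb
    by_cases hc : ρ v = none ∧ C j v ≠ none
    · rw [encR] at hvb; rw [if_pos hc] at hvb
      exact Option.some.inj hvb
    · rw [encR] at hvb; rw [if_neg hc] at hvb; exact hcomp v b hvb
  have hsat : TermSat (C j) (encX C ρ j) := by
    obtain ⟨h1, h2⟩ := dlind_mem C hm hlast (encX C ρ j)
    have he : (⟨DLind C (encX C ρ j), h1⟩ : Fin m) = j := Fin.ext hind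
    rwa [he] at h2
  have hforced : Forced (C j) (encR C ρ j) := by
    intro v b hvb
    have hx : encX C ρ j v = b := hsat v b hvb
    by_cases hρ : ρ v = none
    · rw [encR, if_pos ⟨hρ, by rw [hvb]; simp⟩, hx]
    · have hρv : ρ v = some b := by
        cases hρv : ρ v with
        | none => exact absurd hρv hρ
        | some b' =>
          have hb' := hcomp v b' hρv
          rw [hx] at hb'; rw [hb']
      rw [encR, if_neg (fun hc => hρ hc.1), hρv]
  have hmem : j.val ∈ {i : ℕ | ∃ h : i < m, Forced (C ⟨i, h⟩) (encR C ρ j)} := by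
    exact ⟨j.isLt, by rw [Fin.eta]; exact hforced⟩
  refine le_antisymm ?_ (Nat.sInf_le hmem)
  refine le_csInf ⟨_, hmem⟩ ?_
  intro i hi
  obtain ⟨him, hiF⟩ := hi
  by_contra hlt
  push_neg at hlt
  have hsat_i : TermSat (C ⟨i, him⟩) (encX C ρ j) := fun v b hvb => hcomp' v b (hiF v b hvb)
  have hle : DLind C (encX C ρ j) ≤ i := Nat.sInf_le ⟨him, hsat_i⟩
  omega

noncomputable def decR (C : Fin m → Term n) {w : ℕ} (hw : ∀ j, termWidth (C j) ≤ w)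
    (j : Fin m) (σ : Restriction n) (a : Fin w → Bool) : Restriction n := fun v =>
  if h : v ∈ varsOf (C j) then
    (if a ⟨((((varsOf (C j)).orderIsoOfFin rfl).symm ⟨v, h⟩ : Fin _)).val,
        lt_of_lt_of_le (Fin.is_lt _) (by rw [varsOf_card]; exact hw j)⟩ then none else σ v)
  else σ v

lemma decR_encR (C : Fin m → Term n) {w : ℕ} (hw : ∀ j, termWidth (C j) ≤ w)
    (ρ : Restriction n) (j : Fin m) :
    decR C hw j (encR C ρ j) (encA C ρ j w) = ρ := by
  funext v
  by_cases h : v ∈ varsOf (C j)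
  · have hvj : C j v ≠ none := by
      rw [varsOf, Finset.mem_filter] at h; exact h.2
    rw [decR]
    rw [dif_pos h]
    have hl : ((((varsOf (C j)).orderIsoOfFin rfl).symm ⟨v, h⟩ : Fin _)).val
        < (varsOf (C j)).card := Fin.is_lt _
    have ha : encA C ρ j w ⟨((((varsOf (C j)).orderIsoOfFin rfl).symm ⟨v, h⟩ : Fin _)).val,
        lt_of_lt_of_le (Fin.is_lt _) (by rw [varsOf_card]; exact hw j)⟩
        = decide (ρ v = none) := by
      rw [encA]
      simp only
      rw [dif_pos hl]
      congr 1
      have he : (((varsOf (C j)).orderIsoOfFin rfl)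
          ⟨((((varsOf (C j)).orderIsoOfFin rfl).symm ⟨v, h⟩ : Fin _)).val, hl⟩)
          = ⟨v, h⟩ := by
        rw [Fin.eta]
        exact OrderIso.apply_symm_apply _ _
      rw [he]
    rw [ha]
    by_cases hρ : ρ v = none
    · simp [hρ]
    · have : decide (ρ v = none) = false := by simp [hρ]
      rw [this]
      simp only [Bool.false_eq_true, if_false]
      rw [encR, if_neg (fun hc => hρ hc.1)]
  · rw [decR, dif_neg h, encR, if_neg]
    intro hc
    exact h (by rw [varsOf, Finset.mem_filter]; exact ⟨Finset.mem_univ v, hc.2⟩)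

end EncodingAux

theorem encoding_injection {n m w k : ℕ} (C : Fin m → Term n)
    (hw : ∀ j, termWidth (C j) ≤ w)
    (hm : 0 < m) (hlast : C ⟨m - 1, Nat.sub_lt hm one_pos⟩ = fun _ => none) :
    ∃ f : {p : Restriction n × ℕ // stars p.1 = k ∧ 1 ≤ p.2 ∧ p.2 ≤ useNum C p.1} →
          {q : Restriction n × (Fin w → Bool) // ∃ j ≤ w, stars q.1 = k - j},
      Function.Injective f := by
  classical
  refine ⟨fun p =>
    ⟨(EncodingAux.encR C p.1.1 (EncodingAux.encJ C hm p.1.1 p.1.2),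
      EncodingAux.encA C p.1.1 (EncodingAux.encJ C hm p.1.1 p.1.2) w), ?_⟩, ?_⟩
  · obtain ⟨t, ht, hst⟩ :=
      EncodingAux.stars_encR C p.1.1 (EncodingAux.encJ C hm p.1.1 p.1.2)
    exact ⟨t, le_trans ht (hw _), by rw [hst, p.2.1]⟩
  · rintro ⟨⟨ρ1, s1⟩, hk1, hs1a, hs1b⟩ ⟨⟨ρ2, s2⟩, hk2, hs2a, hs2b⟩ heq
    simp only [Subtype.mk.injEq, Prod.mk.injEq] at heq
    obtain ⟨hR, hA⟩ := heq
    have hs1b' : s1 ≤ useNum C ρ1 := hs1b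
    have hs2b' : s2 ≤ useNum C ρ2 := hs2b
    have h1 : s1 - 1 < (EncodingAux.uset C ρ1).card := by
      rw [← EncodingAux.useNum_eq]; omega
    have h2 : s2 - 1 < (EncodingAux.uset C ρ2).card := by
      rw [← EncodingAux.useNum_eq]; omega
    have hjU1 : Useful C ρ1 (EncodingAux.encJ C hm ρ1 s1) := EncodingAux.encJ_useful C hm ρ1 s1 h1
    have hjU2 : Useful C ρ2 (EncodingAux.encJ C hm ρ2 s2) := EncodingAux.encJ_useful C hm ρ2 s2 h2
    -- recover j
    have hjval : (EncodingAux.encJ C hm ρ1 s1).val = (EncodingAux.encJ C hm ρ2 s2).val := by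
      rw [EncodingAux.decodeJ C hm hlast ρ1 _ hjU1, EncodingAux.decodeJ C hm hlast ρ2 _ hjU2, hR]
    have hj : EncodingAux.encJ C hm ρ1 s1 = EncodingAux.encJ C hm ρ2 s2 := Fin.ext hjval
    -- recover ρ
    have hρ : ρ1 = ρ2 := by
      rw [← EncodingAux.decR_encR C hw ρ1 (EncodingAux.encJ C hm ρ1 s1),
          ← EncodingAux.decR_encR C hw ρ2 (EncodingAux.encJ C hm ρ2 s2),
          hR, hA, hj]
    subst hρ
    -- recover s
    have hs : s1 = s2 := by
      have e1 := EncodingAux.encJ_symm C hm ρ1 s1 h1 (EncodingAux.encJ_mem C hm ρ1 s1 h1)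
      have e2 := EncodingAux.encJ_symm C hm ρ1 s2 h2 (EncodingAux.encJ_mem C hm ρ1 s2 h2)
      have hsub : (⟨EncodingAux.encJ C hm ρ1 s1, EncodingAux.encJ_mem C hm ρ1 s1 h1⟩ :
          {x // x ∈ EncodingAux.uset C ρ1})
          = ⟨EncodingAux.encJ C hm ρ1 s2, EncodingAux.encJ_mem C hm ρ1 s2 h2⟩ :=
        Subtype.ext hj
      rw [hsub] at e1
      rw [e2] at e1
      omega
    subst hs
    rfl
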